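/- arXiv:1408.0691 — 2 statements merged into one kernel-verified Lean document; each statement's English description precedes it below -/
import Mathlib

section
/- Let 𝒜 be a skeletally small additive category closed under direct summands that is precovering in an abelian category ℳ, and let 0 → A′ →^{α′} A →^{α} A″ be an exact sequence in ℳ with A, A′, A″ in 𝒜. Let G be the finitely presented right 𝒜-module defined by the exact sequence 𝒜(−, A) →^{𝒜(−,α)} 𝒜(−, A″) → G → 0. Then for every finitely presented right 𝒜-module H there is an isomorphism of abelian groups Ext²(G, H) ≅ Coker H(α′), where Ext² is computed in the abelian category of finitely presented right 𝒜-modules. -/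
/-!
Statement 13: Let `𝒜` be an additive subcategory, closed under direct summands, of an
abelian category `ℳ` (encoded by a predicate `P` on the objects of `ℳ`), and assume `𝒜` is
precovering in `ℳ`.  Let `0 → A′ → A → A″` be an exact sequence in `ℳ` with `A′, A, A″` in
`𝒜`, and let `G` be the finitely presented right `𝒜`-module defined by the exact sequence
`𝒜(−, A) → 𝒜(−, A″) → G → 0`.  Then for every finitely presented right `𝒜`-module `H`
there is an isomorphism of abelian groups `Ext²(G, H) ≅ Coker H(α′)`, where `Ext²` is
computed in the abelian category of finitely presented right `𝒜`-modules — equivalently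
(and this is how it is stated here), for every projective resolution of `G` by representable
functors, the second cohomology of the complex obtained by applying `Hom(−, H)` — which by
Yoneda's lemma is the complex `i ↦ H(Q_i)` — is isomorphic to `Coker H(α′)`.
-/

open CategoryTheory CategoryTheory.Limits Opposite

noncomputable section


/-- A full subcategory of a preadditive category is preadditive. -/
instance fullSubcategoryPreadditive {ℳ : Type u₁} [Category.{v₁} ℳ] [Preadditive ℳ]
    (P : ℳ → Prop) : Preadditive (ObjectProperty.FullSubcategory P) where
  homGroup X Y := InducedCategory.homEquiv.addCommGroup
  add_comp _ _ _ _ _ _ := by ext; apply Preadditive.add_comp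
  comp_add _ _ _ _ _ _ := by ext; apply Preadditive.comp_add

/-- Exactness of a composable pair in an abelian category. -/
def ExactAt {A : Type*} [Category A] [Abelian A] {X Y Z : A}
    (f : X ⟶ Y) (g : Y ⟶ Z) : Prop :=
  ∃ w : f ≫ g = 0, (ShortComplex.mk f g w).Exact

variable (𝒞 : Type u₁) [Category.{v₁} 𝒞] [Preadditive 𝒞]

/-- A right `𝒞`-module: an additive contravariant functor from `𝒞` to abelian groups. -/
abbrev RightMod := 𝒞ᵒᵖ ⥤ AddCommGrpCat.{v₁}

/-- A left `𝒞`-module: an additive covariant functor from `𝒞` to abelian groups. -/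
abbrev LeftMod := 𝒞 ⥤ AddCommGrpCat.{v₁}

variable {𝒞} in
/-- A right `𝒞`-module is finitely presented if it is the cokernel of a morphism of
representable functors `𝒞(−, B) → 𝒞(−, A)`. -/
def IsFpRight (F : RightMod 𝒞) : Prop :=
  ∃ (A B : 𝒞) (φ : B ⟶ A) (π : preadditiveYoneda.obj A ⟶ F),
    Epi π ∧ ExactAt (preadditiveYoneda.map φ) π

variable {𝒞} in
/-- A left `𝒞`-module is finitely presented if it is the cokernel of a morphism of
representable functors `𝒞(A, −) → 𝒞(B, −)`. -/
def IsFpLeft (F : LeftMod 𝒞) : Prop :=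
  ∃ (A B : 𝒞) (φ : A ⟶ B) (π : preadditiveCoyoneda.obj (Opposite.op A) ⟶ F),
    Epi π ∧ ExactAt (preadditiveCoyoneda.map φ.op) π

variable {𝒞} in
/-- The right `𝒞`-module `F` has projective dimension `≤ n`: there is an exact sequence
`0 → 𝒞(−, X_n) → ⋯ → 𝒞(−, X_0) → F → 0` of right `𝒞`-modules (the projective objects
among finitely presented right `𝒞`-modules being precisely the direct summands of
representables).  The resolution is encoded by an `ℕ`-indexed family which vanishes in
degrees `> n`. -/
def rightPdLE (F : RightMod 𝒞) (n : ℕ) : Prop :=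
  ∃ (X : ℕ → 𝒞) (q : ∀ i, X (i + 1) ⟶ X i) (ε : preadditiveYoneda.obj (X 0) ⟶ F),
    Epi ε ∧ ExactAt (preadditiveYoneda.map (q 0)) ε ∧
      (∀ i, ExactAt (preadditiveYoneda.map (q (i + 1))) (preadditiveYoneda.map (q i))) ∧
      (∀ i, n < i → IsZero (X i))

variable {𝒞} in
/-- The left `𝒞`-module `F` has projective dimension `≤ n`. -/
def leftPdLE (F : LeftMod 𝒞) (n : ℕ) : Prop :=
  ∃ (X : ℕ → 𝒞) (q : ∀ i, X i ⟶ X (i + 1)) (ε : preadditiveCoyoneda.obj (Opposite.op (X 0)) ⟶ F),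
    Epi ε ∧ ExactAt (preadditiveCoyoneda.map (q 0).op) ε ∧
      (∀ i, ExactAt (preadditiveCoyoneda.map (q (i + 1)).op) (preadditiveCoyoneda.map (q i).op)) ∧
      (∀ i, n < i → IsZero (X i))

/-- The right global dimension of the "ring with several objects" `𝒞`, as an element
of `ℕ∞`: the supremum of the projective dimensions of all finitely presented right
`𝒞`-modules. -/
noncomputable def rightGldim : ℕ∞ :=
  sInf {c : ℕ∞ | ∃ n : ℕ, c = (n : ℕ∞) ∧ ∀ F : RightMod 𝒞, IsFpRight F → rightPdLE F n}

/-- The left global dimension of the "ring with several objects" `𝒞`, as an element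
of `ℕ∞`: the supremum of the projective dimensions of all finitely presented left
`𝒞`-modules. -/
noncomputable def leftGldim : ℕ∞ :=
  sInf {c : ℕ∞ | ∃ n : ℕ, c = (n : ℕ∞) ∧ ∀ F : LeftMod 𝒞, IsFpLeft F → leftPdLE F n}

/-- A projective resolution `0 → P_n → ⋯ → P_0 → M → 0` of length `≤ n` of a module over a
ring, witnessing projective dimension `≤ n`; the resolution is encoded by an `ℕ`-indexed
family which vanishes in degrees `> n`. -/
def ModulePdLE (A : Type u₂) [Ring A] (M : ModuleCat.{u₂} A) (n : ℕ) : Prop :=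
  ∃ (P : ℕ → ModuleCat.{u₂} A) (g : ∀ i, P (i + 1) ⟶ P i) (ε : P 0 ⟶ M),
    (∀ i, Module.Projective A (P i)) ∧ Epi ε ∧ ExactAt (g 0) ε ∧
      (∀ i, ExactAt (g (i + 1)) (g i)) ∧ (∀ i, n < i → Subsingleton (P i))

/-- The global dimension of a ring `A`, as an element of `ℕ∞`: the supremum of the
projective dimensions of all (left) `A`-modules. -/
noncomputable def ringGlobalDim (A : Type u₂) [Ring A] : ℕ∞ :=
  sInf {c : ℕ∞ | ∃ n : ℕ, c = (n : ℕ∞) ∧ ∀ M : ModuleCat.{u₂} A, ModulePdLE A M n}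


/-- `𝒜` (the full subcategory of objects satisfying `P`) is precovering in `ℳ`. -/
def IsPrecovering {ℳ : Type u₁} [Category.{v₁} ℳ] (P : ℳ → Prop) : Prop :=
  ∀ M : ℳ, ∃ (A : ℳ) (_ : P A) (π : A ⟶ M),
    ∀ (A' : ℳ), P A' → ∀ π' : A' ⟶ M, ∃ θ : A' ⟶ A, θ ≫ π = π'

section ExtHelpers

variable {𝒟 : Type u₃} [Category.{v₃} 𝒟]

lemma exactAt_app {F G K : 𝒟ᵒᵖ ⥤ AddCommGrpCat.{v₃}} {φ : F ⟶ G} {ψ : G ⟶ K}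
    (h : ExactAt φ ψ) (X : 𝒟ᵒᵖ) (g : G.obj X) (hg : ψ.app X g = 0) :
    ∃ f : F.obj X, φ.app X f = g := by
  obtain ⟨w0, hex⟩ := h
  have := hex.map ((evaluation 𝒟ᵒᵖ AddCommGrpCat.{v₃}).obj X)
  rw [ShortComplex.ab_exact_iff] at this
  exact this g hg

lemma epi_app_surjective {F G : 𝒟ᵒᵖ ⥤ AddCommGrpCat.{v₃}} (φ : F ⟶ G) [Epi φ] (X : 𝒟ᵒᵖ) :
    Function.Surjective (φ.app X) := by
  rw [← AddCommGrpCat.epi_iff_surjective]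
  exact (NatTrans.epi_iff_epi_app φ).1 inferInstance X

variable [Preadditive 𝒟]

lemma yoneda_app_eq {B : 𝒟} {F : 𝒟ᵒᵖ ⥤ AddCommGrpCat.{v₃}} (σ : preadditiveYoneda.obj B ⟶ F)
    {X : 𝒟} (f : X ⟶ B) :
    σ.app (op X) f = F.map f.op (σ.app (op B) (𝟙 B)) := by
  have h2 : σ.app (op X) (((preadditiveYoneda.obj B).map f.op) (𝟙 B)) =
      F.map f.op (σ.app (op B) (𝟙 B)) := by
    exact ConcreteCategory.congr_hom (σ.naturality f.op) _
  have h3 : ((preadditiveYoneda.obj B).map f.op) (𝟙 B) = f := Category.comp_id f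
  rw [h3] at h2; exact h2

lemma yoneda_app_comp {B : 𝒟} {F : 𝒟ᵒᵖ ⥤ AddCommGrpCat.{v₃}} (σ : preadditiveYoneda.obj B ⟶ F)
    {X Y : 𝒟} (u : X ⟶ Y) (h : Y ⟶ B) :
    σ.app (op X) (u ≫ h) = F.map u.op (σ.app (op Y) h) := by
  rw [yoneda_app_eq σ (u ≫ h), yoneda_app_eq σ h, op_comp, F.map_comp, comp_apply]

lemma yoneda_w {B' B'' : 𝒟} {F : 𝒟ᵒᵖ ⥤ AddCommGrpCat.{v₃}} {φ : B' ⟶ B''}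
    {ψ : preadditiveYoneda.obj B'' ⟶ F}
    (w : preadditiveYoneda.map φ ≫ ψ = 0) {X : 𝒟} (f : X ⟶ B') :
    ψ.app (op X) (f ≫ φ) = 0 := by
  have h2 : ψ.app (op X) ((preadditiveYoneda.map φ).app (op X) f) = 0 := by
    refine (ConcreteCategory.congr_hom (NatTrans.congr_app w (op X)) f).trans ?_
    rfl
  exact h2

lemma yoneda_exact_lift {B' B'' : 𝒟} {F : 𝒟ᵒᵖ ⥤ AddCommGrpCat.{v₃}} {φ : B' ⟶ B''}
    {ψ : preadditiveYoneda.obj B'' ⟶ F}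
    (h : ExactAt (preadditiveYoneda.map φ) ψ) {X : 𝒟} (f : X ⟶ B'')
    (hf : ψ.app (op X) f = 0) :
    ∃ g : X ⟶ B', g ≫ φ = f := by
  obtain ⟨g, hg⟩ := exactAt_app h (op X) f hf
  exact ⟨g, hg⟩

lemma yoneda_exact_lift₂ {B B' B'' : 𝒟} {φ : B ⟶ B'} {ψ : B' ⟶ B''}
    (h : ExactAt (preadditiveYoneda.map φ) (preadditiveYoneda.map ψ)) {X : 𝒟}
    (f : X ⟶ B') (hf : f ≫ ψ = 0) : ∃ g : X ⟶ B, g ≫ φ = f :=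
  yoneda_exact_lift h f hf

end ExtHelpers


theorem ext_two_iso_coker
    {ℳ : Type u₁} [Category.{v₁} ℳ] [Abelian ℳ] (P : ℳ → Prop)
    -- `𝒜` is an additive subcategory closed under direct summands:
    (h0 : ∃ Z : ℳ, P Z ∧ IsZero Z)
    (hbiprod : ∀ X Y : ℳ, P X → P Y → P (X ⊞ Y))
    (hsummand : ∀ X Y : ℳ, P X → (∃ (i : Y ⟶ X) (r : X ⟶ Y), i ≫ r = 𝟙 Y) → P Y)
    -- `𝒜` is precovering in `ℳ`:
    (hprecover : IsPrecovering P)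
    -- an exact sequence `0 → A′ → A → A″` in `ℳ` with terms in `𝒜`:
    (A' A A'' : ObjectProperty.FullSubcategory P) (α' : A' ⟶ A) (α : A ⟶ A'')
    (hmono : Mono ((ObjectProperty.ι P).map α'))
    (hexact : ExactAt ((ObjectProperty.ι P).map α') ((ObjectProperty.ι P).map α))
    -- `G` is the finitely presented right `𝒜`-module defined by
    -- `𝒜(−, A) → 𝒜(−, A″) → G → 0`:
    (G : RightMod (ObjectProperty.FullSubcategory P)) (ε : preadditiveYoneda.obj A'' ⟶ G)
    (hε : Epi ε) (hexactG : ExactAt (preadditiveYoneda.map α) ε)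
    -- `H` is a finitely presented right `𝒜`-module:
    (H : RightMod (ObjectProperty.FullSubcategory P)) [hHadd : H.Additive] (hH : IsFpRight H) :
    -- then, computing `Ext²(G, H)` via any projective resolution of `G` by representables:
    ∀ (Q : ℕ → ObjectProperty.FullSubcategory P) (q : ∀ i, Q (i + 1) ⟶ Q i)
      (ε' : preadditiveYoneda.obj (Q 0) ⟶ G),
      Epi ε' → ExactAt (preadditiveYoneda.map (q 0)) ε' →
      (∀ i, ExactAt (preadditiveYoneda.map (q (i + 1))) (preadditiveYoneda.map (q i))) →
      (hq : ∀ i, q (i + 1) ≫ q i = 0) →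
      Nonempty
        (((CochainComplex.of (fun i => H.obj (op (Q i))) (fun i => H.map (q i).op)
            (fun i => by rw [← H.map_comp, ← op_comp, hq i, op_zero]; exact H.mapAddHom.map_zero)).homology 2)
          ≅ AddCommGrpCat.of (↥(H.obj (op A')) ⧸ (H.map α'.op).hom.range)) := by
  intro Q q ε' hε' hx0 hxs hq
  haveI := hε
  haveI := hε'
  obtain ⟨wM, hM⟩ := hexact
  obtain ⟨wG, hGe⟩ := hexactG
  obtain ⟨w0, hx0e⟩ := hx0
  haveI : Mono (ShortComplex.mk ((ObjectProperty.ι P).map α')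
      ((ObjectProperty.ι P).map α) wM).f := hmono
  haveI monoA' : Mono α' := (ObjectProperty.ι P).mono_of_mono_map hmono
  have hαα : α' ≫ α = 0 := InducedCategory.hom_ext wM
  have hlift : ∀ {B : ObjectProperty.FullSubcategory P} (f : B ⟶ A), f ≫ α = 0 →
      ∃ g : B ⟶ A', g ≫ α' = f := by
    intro B f hf
    obtain ⟨l, hl⟩ := hM.lift' (A := B.obj) f.hom (congrArg InducedCategory.Hom.hom hf)
    exact ⟨InducedCategory.homMk l, InducedCategory.hom_ext hl⟩
  obtain ⟨f0, hf0⟩ : ∃ f0 : Q 0 ⟶ A'', _ := epi_app_surjective ε (op (Q 0)) (ε'.app (op (Q 0)) (𝟙 (Q 0)))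
  have hf0' : ∀ {B : ObjectProperty.FullSubcategory P} (u : B ⟶ Q 0),
      ε.app (op B) (u ≫ f0) = ε'.app (op B) u := by
    intro B u
    rw [yoneda_app_comp ε u f0, hf0, ← yoneda_app_eq ε' u]
  obtain ⟨g0, hg0⟩ : ∃ g0 : A'' ⟶ Q 0, _ := epi_app_surjective ε' (op A'') (ε.app (op A'') (𝟙 A''))
  have hg0' : ∀ {B : ObjectProperty.FullSubcategory P} (u : B ⟶ A''),
      ε'.app (op B) (u ≫ g0) = ε.app (op B) u := by
    intro B u
    rw [yoneda_app_comp ε' u g0, hg0, ← yoneda_app_eq ε u]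
  have hq0ε : ε'.app (op (Q 1)) (q 0) = 0 := by
    have := yoneda_w w0 (𝟙 (Q 1))
    rwa [Category.id_comp] at this
  have hαε : ε.app (op A) α = 0 := by
    have := yoneda_w wG (𝟙 A)
    rwa [Category.id_comp] at this
  obtain ⟨f1, hf1⟩ := yoneda_exact_lift ⟨wG, hGe⟩ (q 0 ≫ f0)
    (by rw [hf0' (q 0)]; exact hq0ε)
  obtain ⟨g1, hg1⟩ := yoneda_exact_lift ⟨w0, hx0e⟩ (α ≫ g0)
    (by rw [hg0' α]; exact hαε)
  obtain ⟨f2, hf2⟩ := hlift (q 1 ≫ f1)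
    (by rw [Category.assoc, hf1, ← Category.assoc, hq 0, Limits.zero_comp])
  obtain ⟨g2, hg2⟩ := yoneda_exact_lift₂ (hxs 0) (α' ≫ g1)
    (by rw [Category.assoc, hg1, ← Category.assoc, hαα, Limits.zero_comp]; rfl)
  have q2f2 : q 2 ≫ f2 = 0 := by
    rw [← cancel_mono α', Category.assoc, hf2, ← Category.assoc, hq 1,
      Limits.zero_comp, Limits.zero_comp]
  obtain ⟨s0, hs0⟩ := yoneda_exact_lift ⟨wG, hGe⟩ (g0 ≫ f0 - 𝟙 A'')
    (by refine (map_sub (ConcreteCategory.hom (ε.app (op A''))) (g0 ≫ f0) (𝟙 A'')).trans ?_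
        exact (congrArg₂ (fun a b => a - b) ((hf0' g0).trans hg0) rfl).trans (sub_self _))
  obtain ⟨s1, hs1⟩ := hlift (g1 ≫ f1 - 𝟙 A - α ≫ s0) (by
    have hA2 : (g1 ≫ f1) ≫ α = α ≫ (g0 ≫ f0) := by
      rw [Category.assoc, hf1, ← Category.assoc, hg1, Category.assoc]
    have hB2 : (α ≫ s0) ≫ α = α ≫ (g0 ≫ f0) - α ≫ 𝟙 A'' := by
      rw [Category.assoc, hs0, Preadditive.comp_sub]
    rw [Preadditive.sub_comp, Preadditive.sub_comp, Category.id_comp, hA2, hB2,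
      Category.comp_id]
    abel)
  have hg2' : g2 ≫ q 1 = α' ≫ g1 := hg2
  have hgf2 : g2 ≫ f2 = 𝟙 A' + α' ≫ s1 := by
    have L : (g2 ≫ f2) ≫ α' = α' ≫ (g1 ≫ f1) := by
      rw [Category.assoc, hf2, ← Category.assoc, hg2', Category.assoc]
    have R : (𝟙 A' + α' ≫ s1) ≫ α' = α' ≫ (g1 ≫ f1) := by
      rw [Preadditive.add_comp, Category.id_comp, Category.assoc, hs1,
        Preadditive.comp_sub, Preadditive.comp_sub, ← Category.assoc α' α, hαα,
        Limits.zero_comp, Category.comp_id]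
      abel
    rw [← cancel_mono α', L, R]
  obtain ⟨t0, ht0⟩ := yoneda_exact_lift ⟨w0, hx0e⟩ (f0 ≫ g0 - 𝟙 (Q 0))
    (by refine (map_sub (ConcreteCategory.hom (ε'.app (op (Q 0)))) (f0 ≫ g0) (𝟙 (Q 0))).trans ?_
        exact (congrArg₂ (fun a b => a - b) ((hg0' f0).trans hf0) rfl).trans (sub_self _))
  obtain ⟨t1, ht1⟩ := yoneda_exact_lift₂ (hxs 0) (f1 ≫ g1 - 𝟙 (Q 1) - q 0 ≫ t0) (by
    have hA1 : (f1 ≫ g1) ≫ q 0 = q 0 ≫ (f0 ≫ g0) := by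
      rw [Category.assoc, hg1, ← Category.assoc, hf1, Category.assoc]
    have hB1 : (q 0 ≫ t0) ≫ q 0 = q 0 ≫ (f0 ≫ g0) - q 0 ≫ 𝟙 (Q 0) := by
      rw [Category.assoc, ht0, Preadditive.comp_sub]
    rw [Preadditive.sub_comp, Preadditive.sub_comp, Category.id_comp, hA1, hB1,
      Category.comp_id]
    abel)
  have ht1' : t1 ≫ q 1 = f1 ≫ g1 - 𝟙 (Q 1) - q 0 ≫ t0 := ht1
  obtain ⟨t2, ht2⟩ := yoneda_exact_lift₂ (hxs 1) (f2 ≫ g2 - 𝟙 (Q 2) - q 1 ≫ t1) (by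
    have hA3 : (f2 ≫ g2) ≫ q 1 = q 1 ≫ (f1 ≫ g1) := by
      rw [Category.assoc, hg2', ← Category.assoc, hf2, Category.assoc]
    have hB3 : (q 1 ≫ t1) ≫ q 1 = q 1 ≫ (f1 ≫ g1) - q 1 ≫ 𝟙 (Q 1) := by
      rw [Category.assoc, ht1', Preadditive.comp_sub, Preadditive.comp_sub,
        ← Category.assoc (q 1) (q 0), hq 0, Limits.zero_comp]
      abel
    rw [Preadditive.sub_comp, Preadditive.sub_comp, Category.id_comp, hA3, hB3,
      Category.comp_id]
    abel)
  have ht2' : t2 ≫ q 2 = f2 ≫ g2 - 𝟙 (Q 2) - q 1 ≫ t1 := ht2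
  -- the two short complexes and the comparison morphisms between them
  have Hc : ∀ {X Y Z : ObjectProperty.FullSubcategory P} (u : X ⟶ Y) (v : Y ⟶ Z),
      H.map v.op ≫ H.map u.op = H.map (u ≫ v).op := by
    intro X Y Z u v
    rw [op_comp, H.map_comp]
  have Hz : ∀ {X Y : (ObjectProperty.FullSubcategory P)ᵒᵖ}, H.map (0 : X ⟶ Y) = 0 :=
    fun {X Y} => H.mapAddHom.map_zero
  have hS1w : H.map (q 1).op ≫ H.map (q 2).op = 0 := by
    rw [Hc (q 2) (q 1), hq 1, op_zero, Hz]
  let S1 : ShortComplex AddCommGrpCat.{v₁} :=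
    ShortComplex.mk (H.map (q 1).op) (H.map (q 2).op) hS1w
  let S2 : ShortComplex AddCommGrpCat.{v₁} :=
    ShortComplex.mk (H.map α'.op) (0 : H.obj (op A') ⟶ H.obj (op A'))
      Limits.comp_zero
  let Φ : S2 ⟶ S1 := ⟨H.map f1.op, H.map f2.op, 0,
    by rw [Hc (q 1) f1, Hc f2 α', hf2],
    by
      show H.map f2.op ≫ H.map (q 2).op = 0 ≫ 0
      rw [Hc (q 2) f2, q2f2, op_zero, Hz, Limits.zero_comp]⟩
  let Ψ : S1 ⟶ S2 := ⟨H.map g1.op, H.map g2.op, 0,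
    by rw [Hc α' g1, Hc g2 (q 1), hg2'],
    by
      show H.map g2.op ≫ 0 = H.map (q 2).op ≫ 0
      rw [Limits.comp_zero, Limits.comp_zero]⟩
  have hααs : α' ≫ α ≫ s0 = 0 := by
    rw [← Category.assoc, hαα, Limits.zero_comp]
  have e1 : g1 ≫ f1 = 𝟙 A + α ≫ s0 + s1 ≫ α' := by rw [hs1]; abel
  have hty2 : ShortComplex.Homotopy (Φ ≫ Ψ) (𝟙 S2) :=
    { h₀ := H.map (α ≫ s0).op
      h₀_f := by
        show H.map (α ≫ s0).op ≫ H.map α'.op = 0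
        rw [Hc α' (α ≫ s0), hααs, op_zero, Hz]
      h₁ := H.map s1.op
      h₂ := 0
      h₃ := -𝟙 (H.obj (op A'))
      g_h₃ := by
        show (0 : H.obj (op A') ⟶ H.obj (op A')) ≫ (-𝟙 (H.obj (op A'))) = 0
        rw [Limits.zero_comp]
      comm₁ := by
        show H.map f1.op ≫ H.map g1.op =
          H.map α'.op ≫ H.map s1.op + H.map (α ≫ s0).op + 𝟙 (H.obj (op A))
        rw [Hc g1 f1, Hc s1 α', e1, op_add, op_add, H.map_add, H.map_add,
          op_id, H.map_id]
        abel
      comm₂ := by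
        show H.map f2.op ≫ H.map g2.op =
          (0 : H.obj (op A') ⟶ H.obj (op A')) ≫ 0 + H.map s1.op ≫ H.map α'.op +
            𝟙 (H.obj (op A'))
        rw [Hc g2 f2, Hc α' s1, hgf2, op_add, H.map_add, op_id, H.map_id,
          Limits.zero_comp]
        abel
      comm₃ := by
        show (0 : H.obj (op A') ⟶ H.obj (op A')) ≫ 0 =
          -𝟙 (H.obj (op A')) + (0 : H.obj (op A') ⟶ H.obj (op A')) ≫ 0 +
            𝟙 (H.obj (op A'))
        rw [Limits.zero_comp]
        abel }
  have hq10t : q 1 ≫ q 0 ≫ t0 = 0 := by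
    rw [← Category.assoc, hq 0, Limits.zero_comp]
  have hqt : (q 2 ≫ t2) ≫ q 2 = -q 2 := by
    rw [Category.assoc, ht2', Preadditive.comp_sub, Preadditive.comp_sub,
      Category.comp_id, ← Category.assoc (q 2) f2, q2f2, Limits.zero_comp,
      ← Category.assoc (q 2) (q 1), hq 1, Limits.zero_comp]
    abel
  have e2 : f1 ≫ g1 = 𝟙 (Q 1) + q 0 ≫ t0 + t1 ≫ q 1 := by rw [ht1']; abel
  have e3 : f2 ≫ g2 = 𝟙 (Q 2) + q 1 ≫ t1 + t2 ≫ q 2 := by rw [ht2']; abel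
  have hty1 : ShortComplex.Homotopy (Ψ ≫ Φ) (𝟙 S1) :=
    { h₀ := H.map (q 0 ≫ t0).op
      h₀_f := by
        show H.map (q 0 ≫ t0).op ≫ H.map (q 1).op = 0
        rw [Hc (q 1) (q 0 ≫ t0), hq10t, op_zero, Hz]
      h₁ := H.map t1.op
      h₂ := H.map t2.op
      h₃ := -𝟙 (H.obj (op (Q 3))) - H.map (q 2 ≫ t2).op
      g_h₃ := by
        show H.map (q 2).op ≫ (-𝟙 (H.obj (op (Q 3))) - H.map (q 2 ≫ t2).op) = 0
        rw [Preadditive.comp_sub, Preadditive.comp_neg, Category.comp_id,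
          Hc (q 2 ≫ t2) (q 2), hqt, op_neg, H.map_neg]
        abel
      comm₁ := by
        show H.map g1.op ≫ H.map f1.op =
          H.map (q 1).op ≫ H.map t1.op + H.map (q 0 ≫ t0).op + 𝟙 (H.obj (op (Q 1)))
        rw [Hc f1 g1, Hc t1 (q 1), e2, op_add, op_add, H.map_add, H.map_add,
          op_id, H.map_id]
        abel
      comm₂ := by
        show H.map g2.op ≫ H.map f2.op =
          H.map (q 2).op ≫ H.map t2.op + H.map t1.op ≫ H.map (q 1).op +
            𝟙 (H.obj (op (Q 2)))
        rw [Hc f2 g2, Hc t2 (q 2), Hc (q 1) t1, e3, op_add, op_add, H.map_add,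
          H.map_add, op_id, H.map_id]
        abel
      comm₃ := by
        show (0 : H.obj (op (Q 3)) ⟶ H.obj (op A')) ≫ 0 =
          (-𝟙 (H.obj (op (Q 3))) - H.map (q 2 ≫ t2).op) +
            H.map t2.op ≫ H.map (q 2).op + 𝟙 (H.obj (op (Q 3)))
        rw [Limits.zero_comp, Hc (q 2) t2]
        abel }
  have e12 : ShortComplex.homologyMap Ψ ≫ ShortComplex.homologyMap Φ = 𝟙 _ := by
    rw [← ShortComplex.homologyMap_comp, hty1.homologyMap_congr,
      ShortComplex.homologyMap_id]
  have e21 : ShortComplex.homologyMap Φ ≫ ShortComplex.homologyMap Ψ = 𝟙 _ := by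
    rw [← ShortComplex.homologyMap_comp, hty2.homologyMap_congr,
      ShortComplex.homologyMap_id]
  let iso12 : S1.homology ≅ S2.homology :=
    ⟨ShortComplex.homologyMap Ψ, ShortComplex.homologyMap Φ, e12, e21⟩
  let S2data := ShortComplex.LeftHomologyData.ofIsColimitCokernelCofork S2 rfl
    (AddCommGrpCat.cokernelCocone S2.f) (AddCommGrpCat.cokernelIsColimit S2.f)
  exact ⟨Iso.trans (HomologicalComplex.homologyIsoSc' _ 1 2 3
    ((ComplexShape.up ℕ).prev_eq' rfl) ((ComplexShape.up ℕ).next_eq' rfl))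
    (Iso.trans (ShortComplex.homologyMapIso
      ((ShortComplex.isoMk (Iso.refl _) (Iso.refl _) (Iso.refl _)
        (by simp only [Iso.refl_hom, Category.id_comp, Category.comp_id])
        (by simp only [Iso.refl_hom, Category.id_comp, Category.comp_id])) :
        _ ≅ S1)) (iso12.trans S2data.homologyIso))⟩



end
end

section
/- Assume R has finite CM-type and let X be a representation generator of MCM with Auslander algebra E = End_R(X). If gl.dim E ≤ 1, then R is a regular local ring. -/
/-!
Statement 15: Let `(R, 𝔪, k)` be a commutative noetherian local Cohen–Macaulay ring of Krull
dimension `d` admitting a dualizing module `Ω`.  Assume `R` has finite CM-type and let `X`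
be a representation generator of `MCM`, with Auslander algebra `E = End_R(X)`.  If
`gl.dim E ≤ 1`, then `R` is a regular local ring (i.e. its maximal ideal can be generated by
`d = dim R` elements).
-/

open CategoryTheory CategoryTheory.Limits Opposite

noncomputable section

/-- The depth of a module over a local ring, as an element of `ℕ∞`:
the supremum of the lengths of `M`-regular sequences with entries in the maximal ideal.
By convention the zero module has depth `+∞`. -/
noncomputable def moduleDepth (R : Type*) [CommRing R] [IsLocalRing R]
    (M : Type*) [AddCommGroup M] [Module R M] : ℕ∞ :=
  letI : Decidable (Subsingleton M) := Classical.propDecidable _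
  if Subsingleton M then ⊤
  else sSup {n : ℕ∞ | ∃ rs : List R, (∀ r ∈ rs, r ∈ IsLocalRing.maximalIdeal R) ∧
    RingTheory.Sequence.IsRegular M rs ∧ (rs.length : ℕ∞) = n}

/-- A finitely generated module `M` over a local ring of Krull dimension `d` is maximal
Cohen–Macaulay if `depth M ≥ d` (in particular, the zero module is maximal Cohen–Macaulay). -/
def IsMCM (R : Type*) [CommRing R] [IsLocalRing R] (d : ℕ)
    (M : Type*) [AddCommGroup M] [Module R M] : Prop :=
  Module.Finite R M ∧ (d : ℕ∞) ≤ moduleDepth R M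

/-- `Ext^i_R(M, N)` for `R`-modules, via the derived functor `Ext` of `Mathlib`. -/
noncomputable def moduleExt (R : Type u) [CommRing R] (i : ℕ)
    (M N : ModuleCat.{u} R) : ModuleCat.{u} R :=
  ((_root_.Ext R (ModuleCat.{u} R) i).obj (Opposite.op M)).obj N

/-- `Ω` is a dualizing (canonical) module for the `d`-dimensional Cohen–Macaulay local ring
`R` if it is finitely generated, `Ext^i_R(k, Ω) = 0` for `i ≠ d`, and `Ext^d_R(k, Ω) ≅ k`. -/
def IsDualizingModule (R : Type u) [CommRing R] [IsLocalRing R] (d : ℕ)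
    (Ω : Type u) [AddCommGroup Ω] [Module R Ω] : Prop :=
  Module.Finite R Ω ∧
    (∀ i : ℕ, i ≠ d → Subsingleton
      (moduleExt R i (ModuleCat.of R (IsLocalRing.ResidueField R)) (ModuleCat.of R Ω))) ∧
    Nonempty (moduleExt R d (ModuleCat.of R (IsLocalRing.ResidueField R)) (ModuleCat.of R Ω)
      ≅ ModuleCat.of R (IsLocalRing.ResidueField R))


variable (𝒞 : Type u₁) [Category.{v₁} 𝒞] [Preadditive 𝒞]

/-- An `R`-module is indecomposable if it is nonzero and its only idempotent endomorphisms
are `0` and the identity. -/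
def IsIndecomposable (R : Type u) [CommRing R]
    (M : Type v) [AddCommGroup M] [Module R M] : Prop :=
  Nontrivial M ∧ ∀ e : M →ₗ[R] M, e.comp e = e → e = 0 ∨ e = LinearMap.id

section Aux

universe w

/-- The product of two projective modules is projective. -/
theorem projective_prod_aux {A : Type*} [Semiring A] {M N : Type*}
    [AddCommMonoid M] [AddCommMonoid N] [Module A M] [Module A N]
    [hM : Module.Projective A M] [hN : Module.Projective A N] :
    Module.Projective A (M × N) := by
  obtain ⟨sM, hsM⟩ := hM.out
  obtain ⟨sN, hsN⟩ := hN.out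
  refine Module.Projective.of_split (M := (M →₀ A) × (N →₀ A)) (sM.prodMap sN)
    ((Finsupp.linearCombination A _root_.id).prodMap (Finsupp.linearCombination A _root_.id)) ?_
  refine LinearMap.ext fun p => ?_
  simp [LinearMap.prodMap_apply, hsM p.1, hsN p.2]

/-- Schanuel-type lemma: if `p : XX → M` and `ε : P0 → M` are epimorphisms with `XX`, `P0`
projective, and the kernel of `ε` is (isomorphic to) a projective module `P1`, then the
kernel of `p` is projective. -/
theorem ker_projective_of_resolution {A : Type w} [Ring A]
    {XX M P0 P1 : Type w} [AddCommGroup XX] [AddCommGroup M] [AddCommGroup P0]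
    [AddCommGroup P1] [Module A XX] [Module A M] [Module A P0] [Module A P1]
    [Module.Projective A XX] [Module.Projective A P0] [Module.Projective A P1]
    (p : XX →ₗ[A] M) (hp : Function.Surjective p)
    (ε : P0 →ₗ[A] M) (hε : Function.Surjective ε)
    (g0 : P1 →ₗ[A] P0) (hg0 : Function.Injective g0)
    (hrk : LinearMap.range g0 = LinearMap.ker ε) :
    Module.Projective A ↥(LinearMap.ker p) := by
  have hK : Module.Projective A ↥(LinearMap.ker ε) := by
    refine Module.Projective.of_equiv (M := P1)
      (LinearEquiv.ofBijective
        (g0.codRestrict (LinearMap.ker ε)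
          (fun x => hrk ▸ LinearMap.mem_range_self g0 x)) ⟨?_, ?_⟩)
    · intro x y hxy
      exact hg0 (congrArg Subtype.val hxy)
    · rintro ⟨y, hy⟩
      rw [← hrk] at hy
      obtain ⟨x, hx⟩ := hy
      exact ⟨x, Subtype.ext hx⟩
  obtain ⟨α, hα⟩ := Module.projective_lifting_property ε p hε
  obtain ⟨β, hβ⟩ := Module.projective_lifting_property p ε hp
  have hmem1 : ∀ u : ↥(LinearMap.ker p), α ↑u ∈ LinearMap.ker ε := by
    intro u
    have h1 : ε (α ↑u) = p ↑u := LinearMap.congr_fun hα ↑u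
    have h2 : p ↑u = 0 := u.2
    simp [LinearMap.mem_ker, h1, h2]
  let f : ↥(LinearMap.ker p) →ₗ[A] XX × ↥(LinearMap.ker ε) :=
    LinearMap.prod (LinearMap.ker p).subtype
      (LinearMap.codRestrict (LinearMap.ker ε) (α.comp (LinearMap.ker p).subtype)
        (fun u => hmem1 u))
  let G0 : XX × ↥(LinearMap.ker ε) →ₗ[A] XX :=
    (LinearMap.id - β.comp α).comp (LinearMap.fst A XX ↥(LinearMap.ker ε)) +
      (β.comp (LinearMap.ker ε).subtype).comp (LinearMap.snd A XX ↥(LinearMap.ker ε))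
  have hmem2 : ∀ z, G0 z ∈ LinearMap.ker p := by
    rintro ⟨x, k⟩
    have h1 : p (β (α x)) = ε (α x) := LinearMap.congr_fun hβ (α x)
    have h2 : ε (α x) = p x := LinearMap.congr_fun hα x
    have h3 : p (β ↑k) = ε ↑k := LinearMap.congr_fun hβ ↑k
    have h4 : ε (k : P0) = 0 := k.2
    simp [G0, LinearMap.mem_ker, map_add, map_sub, h1, h2, h3, h4]
  let g : XX × ↥(LinearMap.ker ε) →ₗ[A] ↥(LinearMap.ker p) :=
    LinearMap.codRestrict (LinearMap.ker p) G0 hmem2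
  haveI : Module.Projective A (XX × ↥(LinearMap.ker ε)) := projective_prod_aux
  refine Module.Projective.of_split f g ?_
  refine LinearMap.ext fun u => Subtype.ext ?_
  show G0 (↑u, ⟨α ↑u, hmem1 u⟩) = ↑u
  simp [G0]

end Aux

section Main

universe u

open IsLocalRing

/-- Core argument: if every module over `E = End_R(X)` has projective dimension at most 1,
and `R` is a direct summand of `X`, then the maximal ideal of `R` is a projective
`R`-module. -/
theorem maximalIdeal_projective_aux {R : Type u} [CommRing R] [IsLocalRing R]
    [IsNoetherianRing R] (X : Type u) [AddCommGroup X] [Module R X]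
    (i0 : R →ₗ[R] X) (r0 : X →ₗ[R] R) (hri : r0.comp i0 = LinearMap.id)
    (hpd : ∀ M : ModuleCat.{u} (Module.End R X),
      ∃ n : ℕ, n ≤ 1 ∧ ModulePdLE (Module.End R X) M n) :
    Module.Projective R ↥(maximalIdeal R) := by
  classical
  have hri' : ∀ x : R, r0 (i0 x) = x := fun x => LinearMap.congr_fun hri x
  obtain ⟨n, a, ha⟩ := Submodule.fg_iff_exists_fin_generating_family.mp
    (IsNoetherian.noetherian (maximalIdeal R))
  -- the Auslander algebra
  set E := Module.End R X with hE
  -- the `E`-linear map `(x_i) ↦ ∑ a_i • x_i`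
  let φ : (Fin n → X) →ₗ[E] X :=
    { toFun := fun v => ∑ i, a i • v i
      map_add' := fun v w => by
        simp [smul_add, Finset.sum_add_distrib]
      map_smul' := fun e v => by
        show ∑ i, a i • (e • v i) = e • ∑ i, a i • v i
        rw [Module.End.smul_def, map_sum]
        exact Finset.sum_congr rfl fun i _ => by
          rw [Module.End.smul_def, map_smul] }
  set U := LinearMap.range φ with hU
  -- `X` is a projective `E`-module
  haveI hXproj : Module.Projective E X := by
    let s0 : X →ₗ[E] E :=
      { toFun := fun x => r0.smulRight x
        map_add' := fun x y => by
          ext z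
          show r0 z • (x + y) = (r0.smulRight x + r0.smulRight y) z
          rw [LinearMap.add_apply]
          show _ = r0 z • x + r0 z • y
          rw [smul_add]
        map_smul' := fun e x => by
          ext z
          show r0 z • (e • x) = (e * r0.smulRight x) z
          rw [Module.End.mul_apply]
          show r0 z • (e x) = e (r0 z • x)
          rw [map_smul] }
    refine Module.Projective.of_split (M := E) s0 (LinearMap.toSpanSingleton E X (i0 1)) ?_
    refine LinearMap.ext fun x => ?_
    show (r0.smulRight x) (i0 1) = x
    show r0 (i0 1) • x = x
    rw [hri' 1, one_smul]
  -- the projective resolution of `X ⧸ U` over `E`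
  obtain ⟨nn, hnn, PP, gg, ε, h1, h2, h3, h4, h5⟩ :=
    hpd (ModuleCat.of E (X ⧸ U))
  haveI hsub2 : Subsingleton (PP 2) := h5 2 (by omega)
  have hsurj : Function.Surjective ε.hom := (ModuleCat.epi_iff_surjective ε).mp h2
  obtain ⟨w0, hw0⟩ := h3
  have hrk : LinearMap.range (gg 0).hom = LinearMap.ker ε.hom :=
    (ShortComplex.moduleCat_exact_iff_range_eq_ker _).mp hw0
  obtain ⟨w1, hw1⟩ := h4 0
  have hrk1 : LinearMap.range (gg 1).hom = LinearMap.ker (gg 0).hom :=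
    (ShortComplex.moduleCat_exact_iff_range_eq_ker _).mp hw1
  have hinj : Function.Injective (gg 0).hom := by
    rw [← LinearMap.ker_eq_bot, ← hrk1]
    refine le_antisymm ?_ bot_le
    rintro y ⟨x, rfl⟩
    rw [Subsingleton.elim x 0, map_zero]
    exact Submodule.zero_mem ⊥
  haveI hP0 : Module.Projective E (PP 0) := h1 0
  haveI hP1 : Module.Projective E (PP 1) := h1 1
  -- hence `U = ker (X → X ⧸ U)` is projective over `E`
  have hpU : Module.Projective E ↥U := by
    have := ker_projective_of_resolution (A := E) U.mkQ (Submodule.mkQ_surjective U)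
      (ε.hom : (PP 0) →ₗ[E] (X ⧸ U)) hsurj ((gg 0).hom : (PP 1) →ₗ[E] (PP 0)) hinj hrk
    rwa [Submodule.ker_mkQ] at this
  -- the `E`-linear splitting of `φ : Xⁿ ↠ U`
  haveI := hpU
  obtain ⟨s', hs'⟩ := Module.projective_lifting_property φ.rangeRestrict LinearMap.id
    (LinearMap.surjective_rangeRestrict φ)
  -- transfer to an `R`-linear splitting of `(r_i) ↦ ∑ a_i r_i : Rⁿ ↠ 𝔪`
  have hmemA : ∀ j, a j ∈ maximalIdeal R := fun j =>
    ha ▸ Submodule.subset_span ⟨j, rfl⟩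
  let φR : (Fin n → R) →ₗ[R] R :=
    { toFun := fun v => ∑ j, a j * v j
      map_add' := fun v w => by simp [mul_add, Finset.sum_add_distrib]
      map_smul' := fun c v => by simp [Finset.mul_sum, mul_left_comm] }
  have hmemS : ∀ v, φR v ∈ maximalIdeal R := by
    intro v
    show ∑ j, a j * v j ∈ maximalIdeal R
    exact Submodule.sum_mem _ fun j _ => Ideal.mul_mem_right _ _ (hmemA j)
  let φ' : (Fin n → R) →ₗ[R] ↥(maximalIdeal R) :=
    LinearMap.codRestrict (maximalIdeal R) φR hmemS
  have hmemU : ∀ t : ↥(maximalIdeal R), (t : R) • (i0 1) ∈ U := by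
    intro t
    have ht : (t : R) ∈ Submodule.span R (Set.range a) := by rw [ha]; exact t.2
    obtain ⟨c, hc⟩ := (Submodule.mem_span_range_iff_exists_fun R).mp ht
    refine ⟨fun j => c j • i0 1, ?_⟩
    show ∑ j, a j • (c j • i0 1) = (t : R) • i0 1
    rw [← hc, Finset.sum_smul]
    exact Finset.sum_congr rfl fun j _ => by
      rw [smul_smul, smul_eq_mul, mul_comm]
  let αU : ↥(maximalIdeal R) → ↥U := fun t => ⟨(t : R) • i0 1, hmemU t⟩
  have hαU_add : ∀ t t', αU (t + t') = αU t + αU t' := by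
    intro t t'
    refine Subtype.ext ?_
    show ((t : R) + (t' : R)) • i0 1 = (t : R) • i0 1 + (t' : R) • i0 1
    rw [add_smul]
  have hαU_smul : ∀ (c : R) (t), αU (c • t) = (c • (1 : E)) • αU t := by
    intro c t
    refine Subtype.ext ?_
    show (c * (t : R)) • i0 1 = (c • (1 : E)) • ((t : R) • i0 1)
    show (c * (t : R)) • i0 1 = (c • (1 : E)) ((t : R) • i0 1)
    rw [LinearMap.smul_apply, Module.End.one_apply, smul_smul]
  let τ : ↥(maximalIdeal R) →ₗ[R] (Fin n → R) :=
    { toFun := fun t => fun j => r0 (s' (αU t) j)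
      map_add' := fun t t' => by
        funext j
        show r0 (s' (αU (t + t')) j) = r0 (s' (αU t) j) + r0 (s' (αU t') j)
        rw [hαU_add, map_add]
        simp
      map_smul' := fun c t => by
        funext j
        show r0 (s' (αU (c • t)) j) = c • r0 (s' (αU t) j)
        rw [hαU_smul, map_smul]
        show r0 ((c • (1 : E)) • (s' (αU t) j)) = c • r0 (s' (αU t) j)
        show r0 ((c • (1 : E)) (s' (αU t) j)) = c • r0 (s' (αU t) j)
        rw [LinearMap.smul_apply, Module.End.one_apply, map_smul] }
  have Hsplit : φ'.comp τ = LinearMap.id := by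
    refine LinearMap.ext fun t => Subtype.ext ?_
    show ∑ j, a j * r0 (s' (αU t) j) = (t : R)
    have h2' : φ (s' (αU t)) = ((αU t : X)) := by
      have h0 := LinearMap.congr_fun hs' (αU t)
      exact congrArg Subtype.val h0
    have h3' : ∑ j, a j * r0 (s' (αU t) j) = r0 (φ (s' (αU t))) := by
      show _ = r0 (∑ j, a j • s' (αU t) j)
      rw [map_sum]
      exact Finset.sum_congr rfl fun j _ => by rw [map_smul, smul_eq_mul]
    rw [h3', h2']
    show r0 ((t : R) • i0 1) = (t : R)
    rw [map_smul, hri' 1, smul_eq_mul, mul_one]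
  exact Module.Projective.of_split τ φ' Hsplit

end Main

section Main2

universe u
open IsLocalRing

/-- If the maximal ideal of a noetherian local ring is projective, it is generated by at
most `max 1 d` elements, and in fact by at most `d = dim R` elements. -/
theorem span_of_projective_maximalIdeal {R : Type u} [CommRing R] [IsLocalRing R]
    [IsNoetherianRing R] (d : ℕ) (hdim : ringKrullDim R = d)
    (hproj : Module.Projective R ↥(maximalIdeal R)) :
    ∃ s : Finset R, s.card ≤ d ∧ Ideal.span (s : Set R) = maximalIdeal R := by
  classical
  haveI : Module.Finite R ↥(maximalIdeal R) :=
    Module.Finite.iff_fg.mpr (IsNoetherian.noetherian _)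
  haveI := hproj
  haveI : Module.FinitePresentation R ↥(maximalIdeal R) :=
    Module.finitePresentation_of_projective R _
  haveI : Module.Free R ↥(maximalIdeal R) := Module.free_of_flat_of_isLocalRing
  set κ := Module.Free.ChooseBasisIndex R ↥(maximalIdeal R) with hκ
  let b : Module.Basis κ R ↥(maximalIdeal R) := Module.Free.chooseBasis R ↥(maximalIdeal R)
  rcases subsingleton_or_nontrivial κ with hsub | hnt
  · -- at most one basis vector
    rcases isEmpty_or_nonempty κ with hemp | hne
    · -- `𝔪 = 0`
      haveI : Subsingleton ↥(maximalIdeal R) := b.repr.toEquiv.subsingleton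
      refine ⟨∅, by simp, ?_⟩
      rw [Finset.coe_empty, Ideal.span_empty]
      refine (le_antisymm bot_le fun x hx => ?_)
      have : (⟨x, hx⟩ : ↥(maximalIdeal R)) = 0 := Subsingleton.elim _ _
      simpa using congrArg Subtype.val this
    · obtain ⟨i₀⟩ := hne
      haveI : Unique κ := uniqueOfSubsingleton i₀
      set t : R := (b i₀ : R) with htdef
      have htmem : t ∈ maximalIdeal R := (b i₀).2
      have htspan : Ideal.span ({t} : Set R) = maximalIdeal R := by
        refine le_antisymm ?_ ?_
        · rw [Ideal.span_le, Set.singleton_subset_iff]; exact htmem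
        · intro x hx
          have hrepr := b.sum_repr ⟨x, hx⟩
          rw [Fintype.sum_unique] at hrepr
          have : x = b.repr ⟨x, hx⟩ default * t := by
            have := congrArg Subtype.val hrepr
            simpa [htdef, Subsingleton.elim i₀ default] using this.symm
          rw [this]
          exact Ideal.mul_mem_left _ _ (Ideal.mem_span_singleton_self t)
      have htreg : ∀ c : R, c * t = 0 → c = 0 := by
        intro c hc
        have hz : c • b i₀ = 0 := Subtype.ext (by simpa [htdef] using hc)
        have hli := Fintype.linearIndependent_iff.mp b.linearIndependent (fun _ => c)
        refine hli ?_ i₀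
        rw [Fintype.sum_unique]
        simpa [Subsingleton.elim (default : κ) i₀] using hz
      have htnz : t ≠ 0 := by
        intro h0
        exact b.ne_zero i₀ (Subtype.ext (by simpa [htdef] using h0))
      have htnn : ¬ IsNilpotent t := by
        rintro ⟨k, hk⟩
        have : ∀ k : ℕ, t ^ k ≠ 0 := by
          intro k
          induction k with
          | zero => simpa using one_ne_zero
          | succ k ih =>
            intro h
            rw [pow_succ] at h
            exact ih (htreg _ h)
        exact this k hk
      -- find a prime not containing `t`, and conclude `d ≥ 1`
      have hp : ∃ p : Ideal R, p.IsPrime ∧ t ∉ p := by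
        by_contra h
        push_neg at h
        exact htnn (nilpotent_iff_mem_prime.mpr fun J hJ => h J hJ)
      obtain ⟨p, hp, htp⟩ := hp
      have hplt : p < maximalIdeal R :=
        lt_of_le_of_ne (IsLocalRing.le_maximalIdeal hp.ne_top)
          (fun h => htp (h ▸ htmem))
      have h1d : (1 : ℕ) ≤ d := by
        let x : PrimeSpectrum R := ⟨p, hp⟩
        let y : PrimeSpectrum R := ⟨maximalIdeal R, (maximalIdeal.isMaximal R).isPrime⟩
        have hxy : x < y := hplt
        let c : LTSeries (PrimeSpectrum R) :=
          ⟨1, ![x, y], fun i => by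
            fin_cases i
            simpa using hxy⟩
        have hlen := Order.LTSeries.length_le_krullDim c
        rw [show Order.krullDim (PrimeSpectrum R) = ringKrullDim R from rfl, hdim] at hlen
        exact_mod_cast hlen
      exact ⟨{t}, by simpa using h1d, by simpa using htspan⟩
  · -- two distinct basis vectors are impossible in an ideal
    obtain ⟨i₀, i₁, hne⟩ := hnt
    exfalso
    have hinj : Function.Injective ![i₀, i₁] := by
      intro u v huv
      fin_cases u <;> fin_cases v <;> simp_all <;> exact absurd huv hne
    have hli : LinearIndependent R (b ∘ ![i₀, i₁]) := b.linearIndependent.comp _ hinj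
    have hli2 : LinearIndependent R ![b i₀, b i₁] := by
      have : b ∘ ![i₀, i₁] = ![b i₀, b i₁] := by
        funext u; fin_cases u <;> simp
      rwa [this] at hli
    have hz : ((b i₁ : R)) • b i₀ + (-(b i₀ : R)) • b i₁ = 0 := by
      refine Subtype.ext ?_
      push_cast
      simp only [smul_eq_mul]
      ring
    have := (LinearIndependent.pair_iff.mp hli2) (b i₁ : R) (-(b i₀ : R)) hz
    exact b.ne_zero i₁ (Subtype.ext (by simpa using this.1))

end Main2

theorem regular_of_gldim_auslander_algebra_le_one
    (R : Type u) [CommRing R] [IsLocalRing R] [IsNoetherianRing R]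
    (d : ℕ) (hdim : ringKrullDim R = d)
    (hCM : moduleDepth R R = (d : ℕ∞))
    (Ω : Type u) [AddCommGroup Ω] [Module R Ω] (hΩ : IsDualizingModule R d Ω)
    (X : ModuleCat.{u} R) (hX : IsMCM R d X)
    -- `R` has finite CM-type:
    (hfin : ∃ (n : ℕ) (res : Fin n → ModuleCat.{u} R),
      ∀ M : ModuleCat.{u} R, IsMCM R d M → IsIndecomposable R M → ∃ i, Nonempty (M ≅ res i))
    -- `X` is a representation generator of `MCM`: every indecomposable maximal
    -- Cohen–Macaulay module is a direct summand of `X`: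
    (hrep : ∀ (M : Type u) [AddCommGroup M] [Module R M],
      IsMCM R d M → IsIndecomposable R M →
        ∃ (ι : M →ₗ[R] X) (ρ : X →ₗ[R] M), ρ.comp ι = LinearMap.id)
    (hgl : ringGlobalDim (Module.End R X) ≤ 1) :
    ∃ s : Finset R, s.card ≤ d ∧ Ideal.span (s : Set R) = IsLocalRing.maximalIdeal R := by
  classical
  -- `R` itself is an indecomposable maximal Cohen-Macaulay module, hence a direct
  -- summand of `X`.
  have hMCM : IsMCM R d R := ⟨inferInstance, hCM.ge⟩
  have hInd : IsIndecomposable R R := by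
    refine ⟨inferInstance, fun e he => ?_⟩
    have h0 : e (e 1) = e 1 := LinearMap.congr_fun he 1
    have he1 : e 1 * e 1 = e 1 := by
      have h2 : e (e 1) = e 1 * e 1 := by
        conv_lhs => rw [show (e 1 : R) = (e 1) • (1 : R) by rw [smul_eq_mul, mul_one]]
        rw [map_smul, smul_eq_mul]
      rw [← h2, h0]
    rcases IsLocalRing.isUnit_or_isUnit_one_sub_self (e 1) with hu | hu
    · right
      have h1 : e 1 = 1 := hu.mul_left_cancel (by rw [he1, mul_one])
      refine LinearMap.ext fun x => ?_
      show e x = x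
      calc e x = e (x • 1) := by rw [smul_eq_mul, mul_one]
        _ = x • e 1 := by rw [map_smul]
        _ = x := by rw [h1, smul_eq_mul, mul_one]
    · left
      have h2 : (1 - e 1) * (e 1) = 0 := by rw [sub_mul, one_mul, he1, sub_self]
      have h1 : e 1 = 0 := hu.mul_left_cancel (by rw [h2, mul_zero])
      refine LinearMap.ext fun x => ?_
      show e x = 0
      calc e x = e (x • 1) := by rw [smul_eq_mul, mul_one]
        _ = x • e 1 := by rw [map_smul]
        _ = 0 := by rw [h1, smul_zero]
  obtain ⟨i0, r0, hri⟩ := hrep R hMCM hInd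
  -- every module over the Auslander algebra has projective dimension at most one
  have hpd : ∀ M : ModuleCat.{u} (Module.End R X),
      ∃ n : ℕ, n ≤ 1 ∧ ModulePdLE (Module.End R X) M n := by
    have hgl' : sInf {c : ℕ∞ | ∃ n : ℕ, c = (n : ℕ∞) ∧
        ∀ M : ModuleCat.{u} (Module.End R X), ModulePdLE (Module.End R X) M n} ≤ 1 := hgl
    set S := {c : ℕ∞ | ∃ n : ℕ, c = (n : ℕ∞) ∧
        ∀ M : ModuleCat.{u} (Module.End R X), ModulePdLE (Module.End R X) M n} with hS
    have hne : S.Nonempty := by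
      by_contra h
      rw [Set.not_nonempty_iff_eq_empty] at h
      rw [h, sInf_empty] at hgl'
      exact absurd (top_le_iff.mp hgl') (by simp)
    obtain ⟨c, hcS, hmin⟩ := (wellFounded_lt (α := ℕ∞)).has_min S hne
    have hcle : c ≤ sInf S := le_sInf fun b hb => le_of_not_gt (hmin b hb)
    have hc1 : c ≤ 1 := hcle.trans hgl'
    obtain ⟨n, hceq, hall⟩ := hcS
    rw [hceq] at hc1
    have hn1 : n ≤ 1 := by exact_mod_cast hc1
    exact fun M => ⟨n, hn1, hall M⟩
  have hproj := maximalIdeal_projective_aux (X : Type u) i0 r0 hri hpd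
  exact span_of_projective_maximalIdeal d hdim hproj


end
end
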